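/- For every integer n ≥ 1 and every m ∈ {180n² − 40n − 88, 180n² − 46n − 92, 180n² − 52n − 96}, there exist no nonnegative integers α and β such that (30n + 18)·α + (36n + 22)·β = m. -/
import Mathlib


/-- For every integer `n ≥ 1` and every
`m ∈ {180n² − 40n − 88, 180n² − 46n − 92, 180n² − 52n − 96}`, there are no nonnegative
integers `α`, `β` with `(30n + 18)·α + (36n + 22)·β = m`. -/
theorem no_solutions_degree_xv (n : ℤ) (hn : 1 ≤ n)
    (m : ℤ) (hm : m = 180 * n ^ 2 - 40 * n - 88 ∨ m = 180 * n ^ 2 - 46 * n - 92 ∨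
      m = 180 * n ^ 2 - 52 * n - 96) :
    ¬ ∃ α β : ℤ, 0 ≤ α ∧ 0 ≤ β ∧ (30 * n + 18) * α + (36 * n + 22) * β = m := by
  rintro ⟨α, β, h0a, h0b, heq⟩
  have h1 : (18 * n + 11) * (5 * α + 6 * β) = 3 * m + α := by linear_combination 3 * heq
  have h2 : (30 * n + 18) * (5 * α + 6 * β) = 5 * m - 2 * β := by linear_combination 5 * heq
  have hb : (0 : ℤ) < 18 * n + 11 := by linarith
  have hc : (0 : ℤ) ≤ 30 * n + 18 := by linarith
  rcases hm with h | h | h <;> subst h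
  · have hgt : 30 * n - 25 < 5 * α + 6 * β := by
      have h3 : (18 * n + 11) * (30 * n - 25) < (18 * n + 11) * (5 * α + 6 * β) := by
        nlinarith
      exact lt_of_mul_lt_mul_left h3 (by linarith)
    have hge : 30 * n - 24 ≤ 5 * α + 6 * β := by omega
    nlinarith [mul_le_mul_of_nonneg_left hge hc]
  · have hgt : 30 * n - 26 < 5 * α + 6 * β := by
      have h3 : (18 * n + 11) * (30 * n - 26) < (18 * n + 11) * (5 * α + 6 * β) := by
        nlinarith
      exact lt_of_mul_lt_mul_left h3 (by linarith)
    have hge : 30 * n - 25 ≤ 5 * α + 6 * β := by omega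
    nlinarith [mul_le_mul_of_nonneg_left hge hc]
  · have hgt : 30 * n - 27 < 5 * α + 6 * β := by
      have h3 : (18 * n + 11) * (30 * n - 27) < (18 * n + 11) * (5 * α + 6 * β) := by
        nlinarith
      exact lt_of_mul_lt_mul_left h3 (by linarith)
    have hge : 30 * n - 26 ≤ 5 * α + 6 * β := by omega
    nlinarith [mul_le_mul_of_nonneg_left hge hc]
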